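/- Let 0 ≤ k ≤ n be integers and R a commutative ring. The map δ on the free R-module with basis {n;k}, defined by δ(S) := Σ_r (−1)^{d_r(S)} · 2 · S_r where the sum runs over all 1 ≤ r ≤ k with s_{r+1} − s_r > 1 (convention s_{k+1} := n+1) and k − s_r odd, satisfies δ ∘ δ = 0; since d(S_r) = d(S) + 1 for each such r, δ raises the grading by d by exactly one, so these data form a cochain complex of R-modules (the Schubert cochain complex over R). -/

import Mathlib

open scoped BigOperators Classical

/-- `{n;k}`: the set of subsets of `{1,…,n}` of cardinality `k`. -/
def Sset (n k : ℕ) : Finset (Finset ℕ) := (Finset.Icc 1 n).powersetCard k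

/-- `elt S r` is `s_r`, the `r`-th smallest element of `S` (1-indexed); junk value `0` out of range. -/
def elt (S : Finset ℕ) (r : ℕ) : ℕ := (S.sort (· ≤ ·)).getD (r - 1) 0

/-- `s_{r+1}`, with the convention `s_{k+1} = n+1`. -/
def nxt (n : ℕ) (S : Finset ℕ) (r : ℕ) : ℕ := if r = S.card then n + 1 else elt S (r + 1)

/-- `s_{r-1}`, with the convention `s_0 = 0`. -/
def prv (S : Finset ℕ) (r : ℕ) : ℕ := if r = 1 then 0 else elt S (r - 1)

/-- `d_r(S) = Σ_{r ≤ i ≤ k} (s_i − i)`. -/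
def dr (S : Finset ℕ) (r : ℕ) : ℕ := ∑ i ∈ Finset.Icc r S.card, (elt S i - i)

/-- `d(S) = d_1(S)`. -/
def dS (S : Finset ℕ) : ℕ := dr S 1

/-- `S_r`: the set obtained from `S` by replacing `s_r` with `s_r + 1`. -/
def Sr (S : Finset ℕ) (r : ℕ) : Finset ℕ := insert (elt S r + 1) (S.erase (elt S r))

/-- The coefficient of `T` in `δ(S)`. -/
noncomputable def schubCoeff (n k : ℕ) (R : Type*) [CommRing R] (T S : Finset ℕ) : R :=
  ∑ r ∈ Finset.Icc 1 k,
    if 1 < nxt n S r - elt S r ∧ Odd ((k : ℤ) - elt S r) ∧ T = Sr S r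
    then (-1 : R) ^ dr S r * 2 else 0

/-- The matrix of the Schubert differential. -/
noncomputable def schubD (n k : ℕ) (R : Type*) [CommRing R] :
    Matrix ↥(Sset n k) ↥(Sset n k) R :=
  fun T S => schubCoeff n k R T.1 S.1

/-- The Schubert differential `δ` on the free `R`-module with basis `{n;k}`. -/
noncomputable def schubDelta (n k : ℕ) (R : Type*) [CommRing R] :
    (↥(Sset n k) → R) →ₗ[R] (↥(Sset n k) → R) :=
  (schubD n k R).mulVecLin

section Base
variable {n k : ℕ} {S : Finset ℕ} {r : ℕ}

lemma mem_Sset_iff : S ∈ Sset n k ↔ S ⊆ Finset.Icc 1 n ∧ S.card = k :=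
  Finset.mem_powersetCard

lemma length_sort' : (S.sort (· ≤ ·)).length = S.card := Finset.length_sort _

lemma elt_eq_get {i : ℕ} (h1 : 1 ≤ i) (h2 : i ≤ S.card) :
    elt S i = (S.sort (· ≤ ·))[i - 1]'(by rw [length_sort']; omega) := by
  unfold elt
  rw [List.getD_eq_getElem]

lemma elt_mem {i : ℕ} (h1 : 1 ≤ i) (h2 : i ≤ S.card) : elt S i ∈ S := by
  rw [elt_eq_get h1 h2]
  rw [← Finset.mem_sort (α := ℕ) (· ≤ ·)]
  exact List.getElem_mem _

lemma elt_strictMono {i j : ℕ} (h1 : 1 ≤ i) (hij : i < j) (h2 : j ≤ S.card) :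
    elt S i < elt S j := by
  rw [elt_eq_get h1 (by omega), elt_eq_get (by omega) h2]
  have hs := (Finset.sortedLT_sort S).pairwise
  have := hs.rel_get_of_lt (a := ⟨i - 1, by rw [length_sort']; omega⟩)
    (b := ⟨j - 1, by rw [length_sort']; omega⟩) (by simp [Fin.lt_def]; omega)
  simpa using this

lemma one_le_elt (hS : S ∈ Sset n k) {i : ℕ} (h1 : 1 ≤ i) (h2 : i ≤ S.card) :
    1 ≤ elt S i := by
  have := (mem_Sset_iff.mp hS).1 (elt_mem h1 h2)
  exact (Finset.mem_Icc.mp this).1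

lemma elt_le_n (hS : S ∈ Sset n k) {i : ℕ} (h1 : 1 ≤ i) (h2 : i ≤ S.card) :
    elt S i ≤ n := by
  have := (mem_Sset_iff.mp hS).1 (elt_mem h1 h2)
  exact (Finset.mem_Icc.mp this).2

lemma le_elt (hS : S ∈ Sset n k) : ∀ i, 1 ≤ i → i ≤ S.card → i ≤ elt S i := by
  intro i
  induction i with
  | zero => omega
  | succ m ih =>
    intro h1 h2
    rcases Nat.eq_or_lt_of_le h1 with h | h
    · have := one_le_elt hS (i := m + 1) (by omega) h2
      omega
    · have hm := ih (by omega) (by omega)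
      have := elt_strictMono (i := m) (j := m + 1) (by omega) (by omega) h2
      omega

lemma elt_lt_nxt (hS : S ∈ Sset n k) (h1 : 1 ≤ r) (h2 : r ≤ S.card) :
    elt S r < nxt n S r := by
  unfold nxt
  split
  · have := elt_le_n hS h1 h2; omega
  · exact elt_strictMono h1 (by omega) (by omega)

end Base

section Move
variable {n k : ℕ} {S : Finset ℕ} {r : ℕ}

lemma sorted_set (hS : S ∈ Sset n k) (h1 : 1 ≤ r) (h2 : r ≤ S.card)
    (hgap : 1 < nxt n S r - elt S r) :
    List.Pairwise (· < ·) ((S.sort (· ≤ ·)).set (r - 1) (elt S r + 1)) := by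
  set L := S.sort (· ≤ ·) with hL
  have hlen : L.length = S.card := Finset.length_sort _
  have hs := (Finset.sortedLT_sort S).pairwise
  have hrel : ∀ a b : ℕ, (ha : a < L.length) → (hb : b < L.length) → a < b → L[a] < L[b] := by
    intro a b ha hb hab
    exact hs.rel_get_of_lt (a := ⟨a, ha⟩) (b := ⟨b, hb⟩) hab
  have heltr : elt S r = L[r-1]'(by omega) := elt_eq_get h1 h2
  have hnxt : ∀ hr : (r : ℕ) < L.length, elt S r + 1 < L[r]'hr := by
    intro hr
    have hrc : r < S.card := by omega
    have h5 : nxt n S r = L[r] := by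
      unfold nxt; rw [if_neg (by omega)]
      rw [elt_eq_get (by omega) (by omega)]
      congr 1
    omega
  rw [List.pairwise_iff_get]
  intro i j hij
  have hi : (i : ℕ) < L.length := by have := i.2; simpa using this
  have hj : (j : ℕ) < L.length := by have := j.2; simpa using this
  have hij' : (i : ℕ) < (j : ℕ) := hij
  simp only [List.get_eq_getElem, List.getElem_set]
  by_cases hie : r - 1 = (i : ℕ)
  · rw [if_pos hie, if_neg (by omega : ¬ r - 1 = (j : ℕ))]
    have hjr : r ≤ (j : ℕ) := by omega
    rcases Nat.eq_or_lt_of_le hjr with h | h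
    · have h5 := hnxt (h ▸ hj)
      have : L[(j:ℕ)] = L[(r:ℕ)]'(h ▸ hj) := by congr 1; omega
      omega
    · have h5 := hnxt (by omega)
      have := hrel r j (by omega) hj h
      omega
  · rw [if_neg hie]
    by_cases hje : r - 1 = (j : ℕ)
    · rw [if_pos hje]
      have := hrel i (r-1) hi (by omega) (by omega)
      have : L[(r:ℕ)-1]'(by omega) = L[(j:ℕ)] := by congr 1
      omega
    · rw [if_neg hje]
      exact hrel i j hi hj hij'

end Move

section Move2
variable {n k : ℕ} {S : Finset ℕ} {r : ℕ}

lemma toFinset_set (hS : S ∈ Sset n k) (h1 : 1 ≤ r) (h2 : r ≤ S.card)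
    (hgap : 1 < nxt n S r - elt S r) :
    ((S.sort (· ≤ ·)).set (r - 1) (elt S r + 1)).toFinset = Sr S r := by
  set L := S.sort (· ≤ ·) with hL
  have hlen : L.length = S.card := Finset.length_sort _
  have hr1 : r - 1 < L.length := by omega
  have heltr : elt S r = L[r-1]'hr1 := elt_eq_get h1 h2
  have hr11 : r - 1 + 1 = r := by omega
  have hdecomp : L = L.take (r-1) ++ (elt S r) :: L.drop r := by
    conv_lhs => rw [← List.take_append_drop (r-1) L]
    congr 1
    rw [List.drop_eq_getElem_cons hr1, ← heltr, hr11]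
  have hset : L.set (r-1) (elt S r + 1) = L.take (r-1) ++ (elt S r + 1) :: L.drop r := by
    rw [List.set_eq_take_cons_drop _ hr1, hr11]
  have hnd : L.Nodup := Finset.sort_nodup _ _
  have hnd2 : elt S r ∉ L.take (r-1) ∧ elt S r ∉ L.drop r := by
    rw [hdecomp] at hnd
    simp [List.nodup_append] at hnd
    exact ⟨fun h => (hnd.2.2 _ h).1 rfl, hnd.2.1.1⟩
  ext x
  simp only [List.mem_toFinset, hset, List.mem_append, List.mem_cons, Sr,
    Finset.mem_insert, Finset.mem_erase]
  have hxL : x ∈ S ↔ x ∈ L := (Finset.mem_sort _).symm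
  constructor
  · rintro (hx | hx | hx)
    · right
      refine ⟨?_, hxL.mpr (by rw [hdecomp]; simp [hx])⟩
      rintro rfl; exact hnd2.1 hx
    · left; omega
    · right
      refine ⟨?_, hxL.mpr (by rw [hdecomp]; simp [hx])⟩
      rintro rfl; exact hnd2.2 hx
  · rintro (hx | ⟨hne, hx⟩)
    · right; left; omega
    · rw [hxL, hdecomp] at hx
      simp at hx
      rcases hx with hx | hx | hx
      · left; exact hx
      · omega
      · right; right; exact hx

lemma sort_Sr (hS : S ∈ Sset n k) (h1 : 1 ≤ r) (h2 : r ≤ S.card)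
    (hgap : 1 < nxt n S r - elt S r) :
    (Sr S r).sort (· ≤ ·) = (S.sort (· ≤ ·)).set (r - 1) (elt S r + 1) := by
  have hsorted := sorted_set hS h1 h2 hgap
  have hnd : ((S.sort (· ≤ ·)).set (r - 1) (elt S r + 1)).Nodup := hsorted.nodup
  rw [← toFinset_set hS h1 h2 hgap]
  rw [List.toFinset_sort _ hnd]
  exact hsorted.imp le_of_lt

lemma card_Sr (hS : S ∈ Sset n k) (h1 : 1 ≤ r) (h2 : r ≤ S.card)
    (hgap : 1 < nxt n S r - elt S r) : (Sr S r).card = S.card := by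
  have h := sort_Sr hS h1 h2 hgap
  have := congrArg List.length h
  rw [length_sort', List.length_set, length_sort'] at this
  omega

lemma elt_Sr (hS : S ∈ Sset n k) (h1 : 1 ≤ r) (h2 : r ≤ S.card)
    (hgap : 1 < nxt n S r - elt S r) {j : ℕ} (hj1 : 1 ≤ j) (hj2 : j ≤ S.card) :
    elt (Sr S r) j = if j = r then elt S r + 1 else elt S j := by
  have hc := card_Sr hS h1 h2 hgap
  rw [elt_eq_get (S := Sr S r) hj1 (by omega)]
  simp only [sort_Sr hS h1 h2 hgap, List.getElem_set]
  by_cases h : j = r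
  · rw [if_pos (by omega), if_pos h]
  · rw [if_neg (by omega), if_neg h, elt_eq_get hj1 hj2]

lemma mem_Sset_Sr (hS : S ∈ Sset n k) (h1 : 1 ≤ r) (h2 : r ≤ S.card)
    (hgap : 1 < nxt n S r - elt S r) : Sr S r ∈ Sset n k := by
  rw [mem_Sset_iff]
  obtain ⟨hsub, hcard⟩ := mem_Sset_iff.mp hS
  constructor
  · intro x hx
    rw [Sr, Finset.mem_insert, Finset.mem_erase] at hx
    rcases hx with rfl | ⟨_, hx⟩
    · rw [Finset.mem_Icc]
      have h3 := elt_lt_nxt hS h1 h2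
      have h4 : nxt n S r ≤ n + 1 := by
        unfold nxt
        split
        · omega
        · have := elt_le_n hS (i := r + 1) (by omega) (by omega); omega
      have := one_le_elt hS h1 h2
      omega
    · exact hsub hx
  · rw [card_Sr hS h1 h2 hgap, hcard]

lemma nxt_Sr (hS : S ∈ Sset n k) (h1 : 1 ≤ r) (h2 : r ≤ S.card)
    (hgap : 1 < nxt n S r - elt S r) {j : ℕ} (hj1 : 1 ≤ j) (hj2 : j ≤ S.card) :
    nxt n (Sr S r) j = if j + 1 = r then elt S r + 1 else nxt n S j := by
  have hc := card_Sr hS h1 h2 hgap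
  unfold nxt
  rw [hc]
  by_cases h : j = S.card
  · rw [if_pos h, if_neg (by omega), if_pos h]
  · rw [if_neg h, if_neg h, elt_Sr hS h1 h2 hgap (by omega) (by omega)]

lemma dr_Sr (hS : S ∈ Sset n k) (h1 : 1 ≤ r) (h2 : r ≤ S.card)
    (hgap : 1 < nxt n S r - elt S r) {j : ℕ} (hj1 : 1 ≤ j) :
    dr (Sr S r) j = dr S j + if j ≤ r then 1 else 0 := by
  have hc := card_Sr hS h1 h2 hgap
  unfold dr
  rw [hc]
  by_cases h : j ≤ r
  · rw [if_pos h]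
    have : ∀ i ∈ Finset.Icc j S.card,
        elt (Sr S r) i - i = (elt S i - i) + (if i = r then 1 else 0) := by
      intro i hi
      rw [Finset.mem_Icc] at hi
      rw [elt_Sr hS h1 h2 hgap (by omega) hi.2]
      rcases eq_or_ne i r with rfl | hir
      · rw [if_pos rfl, if_pos rfl]
        have := le_elt hS i h1 h2
        omega
      · rw [if_neg hir, if_neg hir]
        omega
    rw [Finset.sum_congr rfl this, Finset.sum_add_distrib]
    congr 1
    rw [Finset.sum_ite_eq' (Finset.Icc j S.card) r (fun _ => 1)]
    rw [if_pos (Finset.mem_Icc.mpr ⟨h, h2⟩)]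
  · rw [if_neg h]
    rw [Nat.add_zero]
    apply Finset.sum_congr rfl
    intro i hi
    rw [Finset.mem_Icc] at hi
    rw [elt_Sr hS h1 h2 hgap (by omega) hi.2, if_neg (by omega)]

end Move2

section Symm
variable {n k : ℕ} {S : Finset ℕ} {r r' : ℕ}

lemma parity_two_le (hS : S ∈ Sset n k) {i j : ℕ} (hi : 1 ≤ i) (hij : i < j)
    (hj : j ≤ S.card) (oi : Odd ((k : ℤ) - elt S i)) (oj : Odd ((k : ℤ) - elt S j)) :
    elt S i + 2 ≤ elt S j := by
  obtain ⟨a, ha⟩ := oi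
  obtain ⟨b, hb⟩ := oj
  have := elt_strictMono hi hij hj
  omega

/-- If `r' + 1 = r` and parities hold, the gap at `r'` is automatic. -/
lemma adj_gap (hS : S ∈ Sset n k) (h1 : 1 ≤ r') (hrr : r' + 1 = r) (h2 : r ≤ S.card)
    (po' : Odd ((k : ℤ) - elt S r')) (po : Odd ((k : ℤ) - elt S r)) :
    1 < nxt n S r' - elt S r' := by
  have hnx : nxt n S r' = elt S r := by
    unfold nxt
    rw [if_neg (by omega), hrr]
  rw [hnx]
  have := parity_two_le hS h1 (by omega) h2 po' po
  omega

lemma gap_transfer (hS : S ∈ Sset n k) (h1 : 1 ≤ r) (h2 : r ≤ S.card)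
    (hgap : 1 < nxt n S r - elt S r) (h1' : 1 ≤ r') (h2' : r' ≤ S.card) (hne : r' ≠ r)
    (po : Odd ((k : ℤ) - elt S r)) (po' : Odd ((k : ℤ) - elt S r')) :
    (1 < nxt n (Sr S r) r' - elt (Sr S r) r') ↔ (1 < nxt n S r' - elt S r') := by
  rw [nxt_Sr hS h1 h2 hgap h1' h2', elt_Sr hS h1 h2 hgap h1' h2', if_neg hne]
  by_cases hadj : r' + 1 = r
  · rw [if_pos hadj]
    have hgap' := adj_gap hS h1' hadj h2 po' po
    have hlt := parity_two_le hS h1' (by omega) h2 po' po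
    constructor
    · intro _; exact hgap'
    · intro _; omega
  · rw [if_neg hadj]

lemma odd_transfer (hS : S ∈ Sset n k) (h1 : 1 ≤ r) (h2 : r ≤ S.card)
    (hgap : 1 < nxt n S r - elt S r) (h1' : 1 ≤ r') (h2' : r' ≤ S.card) (hne : r' ≠ r) :
    Odd ((k : ℤ) - elt (Sr S r) r') ↔ Odd ((k : ℤ) - elt S r') := by
  rw [elt_Sr hS h1 h2 hgap h1' h2', if_neg hne]

lemma sets_comm (hS : S ∈ Sset n k) (h1 : 1 ≤ r) (h2 : r ≤ S.card)
    (hgap : 1 < nxt n S r - elt S r) (h1' : 1 ≤ r') (h2' : r' ≤ S.card) (hne : r' ≠ r)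
    (hgap' : 1 < nxt n S r' - elt S r')
    (po : Odd ((k : ℤ) - elt S r)) (po' : Odd ((k : ℤ) - elt S r')) :
    Sr (Sr S r) r' = Sr (Sr S r') r := by
  have hSr : Sr S r ∈ Sset n k := mem_Sset_Sr hS h1 h2 hgap
  have hSr' : Sr S r' ∈ Sset n k := mem_Sset_Sr hS h1' h2' hgap'
  have hc : (Sr S r).card = S.card := card_Sr hS h1 h2 hgap
  have hc' : (Sr S r').card = S.card := card_Sr hS h1' h2' hgap'
  have hg2 : 1 < nxt n (Sr S r) r' - elt (Sr S r) r' :=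
    (gap_transfer hS h1 h2 hgap h1' h2' hne po po').mpr hgap'
  have hg2' : 1 < nxt n (Sr S r') r - elt (Sr S r') r :=
    (gap_transfer hS h1' h2' hgap' h1 h2 (by omega) po' po).mpr hgap
  have hs1 : (Sr (Sr S r) r').sort (· ≤ ·)
      = ((S.sort (· ≤ ·)).set (r - 1) (elt S r + 1)).set (r' - 1) (elt S r' + 1) := by
    rw [sort_Sr hSr h1' (by omega) hg2, sort_Sr hS h1 h2 hgap,
      elt_Sr hS h1 h2 hgap h1' h2', if_neg hne]
  have hs2 : (Sr (Sr S r') r).sort (· ≤ ·)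
      = ((S.sort (· ≤ ·)).set (r' - 1) (elt S r' + 1)).set (r - 1) (elt S r + 1) := by
    rw [sort_Sr hSr' h1 (by omega) hg2', sort_Sr hS h1' h2' hgap',
      elt_Sr hS h1' h2' hgap' h1 h2, if_neg (by omega)]
  have : (Sr (Sr S r) r').sort (· ≤ ·) = (Sr (Sr S r') r).sort (· ≤ ·) := by
    rw [hs1, hs2, List.set_comm _ _ (by omega : r - 1 ≠ r' - 1)]
  have h3 := congrArg List.toFinset this
  rwa [Finset.sort_toFinset, Finset.sort_toFinset] at h3

end Symm


noncomputable def gAux (n k : ℕ) (R : Type*) [CommRing R] (U S : Finset ℕ) (r r' : ℕ) : R :=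
  if 1 < nxt n S r - elt S r ∧ Odd ((k : ℤ) - elt S r) then
    (if 1 < nxt n (Sr S r) r' - elt (Sr S r) r' ∧ Odd ((k : ℤ) - elt (Sr S r) r')
        ∧ U = Sr (Sr S r) r'
     then (-1 : R) ^ dr (Sr S r) r' * 2 else 0) * ((-1 : R) ^ dr S r * 2)
  else 0

section Cancel
variable {n k : ℕ} {S U : Finset ℕ} {r r' : ℕ} {R : Type*} [CommRing R]

lemma gAux_diag (hS : S ∈ Sset n k) (h1 : 1 ≤ r) (h2 : r ≤ k) :
    gAux n k R U S r r = 0 := by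
  have hcard := (mem_Sset_iff.mp hS).2
  unfold gAux
  by_cases ho : 1 < nxt n S r - elt S r ∧ Odd ((k : ℤ) - elt S r)
  · rw [if_pos ho, if_neg, zero_mul]
    rintro ⟨-, hodd, -⟩
    rw [elt_Sr hS h1 (by omega) ho.1 h1 (by omega), if_pos rfl] at hodd
    obtain ⟨a, ha⟩ := ho.2
    obtain ⟨b, hb⟩ := hodd
    push_cast at ha hb
    omega
  · rw [if_neg ho]

lemma gAux_add (hS : S ∈ Sset n k) (h1 : 1 ≤ r) (h2 : r ≤ k)
    (h1' : 1 ≤ r') (h2' : r' ≤ k) (hne : r ≠ r') :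
    gAux n k R U S r r' + gAux n k R U S r' r = 0 := by
  have hcard := (mem_Sset_iff.mp hS).2
  have h2c : r ≤ S.card := by omega
  have h2c' : r' ≤ S.card := by omega
  by_cases hD : (1 < nxt n S r - elt S r) ∧ Odd ((k : ℤ) - elt S r)
      ∧ (1 < nxt n S r' - elt S r') ∧ Odd ((k : ℤ) - elt S r')
      ∧ U = Sr (Sr S r) r'
  · obtain ⟨hg, ho, hg', ho', hU⟩ := hD
    have hU' : U = Sr (Sr S r') r :=
      hU.trans (sets_comm hS h1 h2c hg h1' h2c' (by omega) hg' ho ho')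
    have hin1 : 1 < nxt n (Sr S r) r' - elt (Sr S r) r' :=
      (gap_transfer hS h1 h2c hg h1' h2c' (by omega) ho ho').mpr hg'
    have hin2 : Odd ((k : ℤ) - elt (Sr S r) r') :=
      (odd_transfer hS h1 h2c hg h1' h2c' (by omega)).mpr ho'
    have hin1' : 1 < nxt n (Sr S r') r - elt (Sr S r') r :=
      (gap_transfer hS h1' h2c' hg' h1 h2c (by omega) ho' ho).mpr hg
    have hin2' : Odd ((k : ℤ) - elt (Sr S r') r) :=
      (odd_transfer hS h1' h2c' hg' h1 h2c (by omega)).mpr ho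
    unfold gAux
    rw [if_pos ⟨hg, ho⟩, if_pos ⟨hin1, hin2, hU⟩, if_pos ⟨hg', ho'⟩,
      if_pos ⟨hin1', hin2', hU'⟩]
    rw [dr_Sr hS h1 h2c hg h1', dr_Sr hS h1' h2c' hg' h1]
    rcases lt_or_gt_of_ne hne with h | h
    · rw [if_neg (by omega : ¬ r' ≤ r), if_pos (by omega : r ≤ r')]
      simp only [pow_add, pow_succ, pow_zero]
      ring
    · rw [if_pos (by omega : r' ≤ r), if_neg (by omega : ¬ r ≤ r')]
      simp only [pow_add, pow_succ, pow_zero]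
      ring
  · have z1 : gAux n k R U S r r' = 0 := by
      unfold gAux
      by_cases ho : 1 < nxt n S r - elt S r ∧ Odd ((k : ℤ) - elt S r)
      · rw [if_pos ho, if_neg, zero_mul]
        rintro ⟨hgin, hoin, hUin⟩
        have ho' : Odd ((k : ℤ) - elt S r') :=
          (odd_transfer hS h1 h2c ho.1 h1' h2c' (by omega)).mp hoin
        have hg' : 1 < nxt n S r' - elt S r' :=
          (gap_transfer hS h1 h2c ho.1 h1' h2c' (by omega) ho.2 ho').mp hgin
        exact hD ⟨ho.1, ho.2, hg', ho', hUin⟩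
      · rw [if_neg ho]
    have z2 : gAux n k R U S r' r = 0 := by
      unfold gAux
      by_cases ho : 1 < nxt n S r' - elt S r' ∧ Odd ((k : ℤ) - elt S r')
      · rw [if_pos ho, if_neg, zero_mul]
        rintro ⟨hgin, hoin, hUin⟩
        have hor : Odd ((k : ℤ) - elt S r) :=
          (odd_transfer hS h1' h2c' ho.1 h1 h2c (by omega)).mp hoin
        have hgr : 1 < nxt n S r - elt S r :=
          (gap_transfer hS h1' h2c' ho.1 h1 h2c (by omega) ho.2 hor).mp hgin
        have hU : U = Sr (Sr S r) r' :=
          hUin.trans (sets_comm hS h1' h2c' ho.1 h1 h2c (by omega) hgr ho.2 hor)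
        exact hD ⟨hgr, hor, ho.1, ho.2, hU⟩
      · rw [if_neg ho]
    rw [z1, z2, add_zero]

lemma collapse (hS : S ∈ Sset n k) (h1 : 1 ≤ r) (h2 : r ≤ k) :
    (∑ T ∈ Sset n k,
      (if 1 < nxt n T r' - elt T r' ∧ Odd ((k : ℤ) - elt T r') ∧ U = Sr T r'
        then (-1 : R) ^ dr T r' * 2 else 0) *
      (if 1 < nxt n S r - elt S r ∧ Odd ((k : ℤ) - elt S r) ∧ T = Sr S r
        then (-1 : R) ^ dr S r * 2 else 0))
    = gAux n k R U S r r' := by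
  have hcard := (mem_Sset_iff.mp hS).2
  unfold gAux
  by_cases ho : 1 < nxt n S r - elt S r ∧ Odd ((k : ℤ) - elt S r)
  · rw [if_pos ho]
    rw [Finset.sum_eq_single_of_mem (Sr S r) (mem_Sset_Sr hS h1 (by omega) ho.1)]
    · congr 1
      exact if_pos ⟨ho.1, ho.2, rfl⟩
    · intro b _ hbne
      exact mul_eq_zero_of_right _ (if_neg (by rintro ⟨-, -, h⟩; exact hbne h))
  · rw [if_neg ho]
    exact Finset.sum_eq_zero fun T _ =>
      mul_eq_zero_of_right _ (if_neg (by rintro ⟨hg, hod, -⟩; exact ho ⟨hg, hod⟩))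

lemma key (hS : S ∈ Sset n k) :
    ∑ T ∈ Sset n k, schubCoeff n k R U T * schubCoeff n k R T S = 0 := by
  unfold schubCoeff
  have step : ∀ T ∈ Sset n k,
      (∑ r' ∈ Finset.Icc 1 k,
        if 1 < nxt n T r' - elt T r' ∧ Odd ((k : ℤ) - elt T r') ∧ U = Sr T r'
        then (-1 : R) ^ dr T r' * 2 else 0) *
      (∑ r ∈ Finset.Icc 1 k,
        if 1 < nxt n S r - elt S r ∧ Odd ((k : ℤ) - elt S r) ∧ T = Sr S r
        then (-1 : R) ^ dr S r * 2 else 0)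
      = ∑ r' ∈ Finset.Icc 1 k, ∑ r ∈ Finset.Icc 1 k,
          (if 1 < nxt n T r' - elt T r' ∧ Odd ((k : ℤ) - elt T r') ∧ U = Sr T r'
            then (-1 : R) ^ dr T r' * 2 else 0) *
          (if 1 < nxt n S r - elt S r ∧ Odd ((k : ℤ) - elt S r) ∧ T = Sr S r
            then (-1 : R) ^ dr S r * 2 else 0) := by
    intro T _
    rw [Finset.sum_mul_sum]
  rw [Finset.sum_congr rfl step, Finset.sum_comm]
  have step2 : ∀ r' ∈ Finset.Icc 1 k,
      (∑ T ∈ Sset n k, ∑ r ∈ Finset.Icc 1 k,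
        (if 1 < nxt n T r' - elt T r' ∧ Odd ((k : ℤ) - elt T r') ∧ U = Sr T r'
          then (-1 : R) ^ dr T r' * 2 else 0) *
        (if 1 < nxt n S r - elt S r ∧ Odd ((k : ℤ) - elt S r) ∧ T = Sr S r
          then (-1 : R) ^ dr S r * 2 else 0))
      = ∑ r ∈ Finset.Icc 1 k, gAux n k R U S r r' := by
    intro r' _
    rw [Finset.sum_comm]
    apply Finset.sum_congr rfl
    intro r hr
    rw [Finset.mem_Icc] at hr
    exact collapse hS hr.1 hr.2
  rw [Finset.sum_congr rfl step2]
  rw [← Finset.sum_product' (Finset.Icc 1 k) (Finset.Icc 1 k)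
      (fun r' r => gAux n k R U S r r')]
  apply Finset.sum_involution (fun p _ => p.swap)
  · intro p hp
    simp only [Finset.mem_product, Finset.mem_Icc] at hp
    obtain ⟨⟨ha1, ha2⟩, hb1, hb2⟩ := hp
    simp only [Prod.fst_swap, Prod.snd_swap]
    rcases eq_or_ne p.2 p.1 with h | h
    · rw [h, gAux_diag hS ha1 ha2, add_zero]
    · exact gAux_add hS hb1 hb2 ha1 ha2 h
  · intro p hp h0
    intro heq
    apply h0
    have h12 : p.1 = p.2 := by
      have := congrArg Prod.snd heq
      simpa using this
    simp only [Finset.mem_product, Finset.mem_Icc] at hp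
    show gAux n k R U S p.2 p.1 = 0
    rw [h12]
    exact gAux_diag hS hp.2.1 hp.2.2
  · intro p _
    simp
  · intro p hp
    simp only [Finset.mem_product, Finset.mem_Icc] at hp
    rw [show (p.swap ∈ Finset.Icc 1 k ×ˢ Finset.Icc 1 k) ↔ _ from Finset.mem_product]
    simp only [Prod.fst_swap, Prod.snd_swap, Finset.mem_Icc]
    exact ⟨hp.2, hp.1⟩

end Cancel


theorem stmt1 (n k : ℕ) (hk : k ≤ n) (R : Type*) [CommRing R] :
    (schubDelta n k R).comp (schubDelta n k R) = 0 ∧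
    (∀ S ∈ Sset n k, ∀ r, 1 ≤ r → r ≤ k →
      1 < nxt n S r - elt S r → Odd ((k : ℤ) - elt S r) →
      Sr S r ∈ Sset n k ∧ dS (Sr S r) = dS S + 1) := by
  constructor
  · have hDD : schubD n k R * schubD n k R = 0 := by
      ext U S
      rw [Matrix.mul_apply, Matrix.zero_apply]
      have : ∀ T : ↥(Sset n k), schubD n k R U T * schubD n k R T S
          = (fun t => schubCoeff n k R U.1 t * schubCoeff n k R t S.1) T.1 := fun _ => rfl
      rw [Finset.sum_congr rfl (fun T _ => this T)]
      rw [Finset.sum_coe_sort (Sset n k) (fun t => schubCoeff n k R U.1 t * schubCoeff n k R t S.1)]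
      exact key S.2
    rw [schubDelta, ← Matrix.mulVecLin_mul, hDD, Matrix.mulVecLin_zero]
  · intro S hS r h1 h2 hgap hodd
    have hcard := (mem_Sset_iff.mp hS).2
    refine ⟨mem_Sset_Sr hS h1 (by omega) hgap, ?_⟩
    unfold dS
    rw [dr_Sr hS h1 (by omega) hgap le_rfl, if_pos h1]
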